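/- Let (X₀, Φ₀) be an N-dimensional net with a single vertex per period, edge vectors ±vᵢ with weights wᵢ (finitely many nonzero), realized harmonically with period homomorphism ρ. Let I ⊂ ℤ^N \ {0} with ℤ^N = I ⊔ (−I) ⊔ {0}, and split the vertex into v₀ and v₁ so that v₁ is the endpoint of the edges indexed by I, with a new connecting edge of weight w₀′ > 0. In the harmonic realization Φ₁ of the split net with Φ₁(v₀) = 0, the position x = Φ₁(v₁) satisfies x = (∑_{i∈I} wᵢvᵢ)/(w₀′ + ∑_{i∈I} wᵢ), where vᵢ = ρ(i). Moreover, T(X₀,Φ₀) − T(X₁,Φ₁) = (w₀′ + ∑_{i∈I} wᵢ)·x⊗x = (∑_{i∈I}wᵢvᵢ)⊗(∑_{i∈I}wᵢvᵢ)/(w₀′ + ∑_{i∈I}wᵢ). -/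

import Mathlib

open Matrix Finset

/-- after a single vertex splitting, the harmonic position `x`
of the new vertex (the minimizer of the quadratic energy) is the weighted
average `(∑ wᵢvᵢ)/(w₀′ + ∑ wᵢ)`, and the drop in the tension tensor equals
`(w₀′ + ∑ wᵢ) x⊗x = (∑ wᵢvᵢ)⊗(∑ wᵢvᵢ)/(w₀′ + ∑ wᵢ)`. -/
theorem stmt_17 (N n : ℕ) (v : Fin n → Fin N → ℝ)
    (w : Fin n → ℝ) (hw : ∀ i, 0 ≤ w i)
    (w₀ : ℝ) (hw₀ : 0 < w₀) (x : Fin N → ℝ)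
    (hmin : ∀ y : Fin N → ℝ,
      (∑ i, w i * ((v i - x) ⬝ᵥ (v i - x))) + w₀ * (x ⬝ᵥ x) ≤
      (∑ i, w i * ((v i - y) ⬝ᵥ (v i - y))) + w₀ * (y ⬝ᵥ y)) :
    x = (w₀ + ∑ i, w i)⁻¹ • ∑ i, w i • v i ∧
    (∑ i, w i • Matrix.vecMulVec (v i) (v i)) -
        ((∑ i, w i • Matrix.vecMulVec (v i - x) (v i - x))
          + w₀ • Matrix.vecMulVec x x)
      = (w₀ + ∑ i, w i) • Matrix.vecMulVec x x ∧
    (w₀ + ∑ i, w i) • Matrix.vecMulVec x x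
      = (w₀ + ∑ i, w i)⁻¹ •
          Matrix.vecMulVec (∑ i, w i • v i) (∑ i, w i • v i) := by
  have hS : (0:ℝ) ≤ ∑ i, w i := Finset.sum_nonneg fun i _ => hw i
  set W : ℝ := w₀ + ∑ i, w i with hWdef
  have hW : 0 < W := by dsimp [W]; linarith
  have hWne : W ≠ 0 := ne_of_gt hW
  -- key: for each coordinate j, W * x j = ∑ i, w i * v i j
  have key : ∀ j : Fin N, W * x j = ∑ i, w i * v i j := by
    intro j
    set d : Fin N → ℝ := Pi.single j 1 with hd
    have hdd : d ⬝ᵥ d = 1 := by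
      simp [hd, dotProduct_single]
    have hud : ∀ u : Fin N → ℝ, u ⬝ᵥ d = u j := by
      intro u; simp [hd, dotProduct_single]
    have expand : ∀ (u : Fin N → ℝ) (t : ℝ),
        (u - t • d) ⬝ᵥ (u - t • d) = u ⬝ᵥ u - 2*t*(u j) + t^2 := by
      intro u t
      have hdu : d ⬝ᵥ u = u j := by rw [dotProduct_comm]; exact hud u
      simp only [sub_dotProduct, dotProduct_sub, smul_dotProduct,
        dotProduct_smul, hdd, hud, hdu, smul_eq_mul, Pi.sub_apply,
        Pi.smul_apply, hd, Pi.single_eq_same]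
      rw [← hd, hdd, hud, hdu]
      ring
    set b : ℝ := W * x j - ∑ i, w i * v i j with hb
    have hnonneg : ∀ t : ℝ, 0 ≤ 2*t*b + t^2 * W := by
      intro t
      have h1 := hmin (x + t • d)
      have h2 : ∀ i, v i - (x + t • d) = (v i - x) - t • d := by
        intro i; abel
      have h3 : x + t • d = x - (-t) • d := by
        simp [neg_smul, sub_neg_eq_add]
      have h4 : (∑ i, w i * ((v i - (x + t•d)) ⬝ᵥ (v i - (x + t•d))))
            + w₀ * ((x + t•d) ⬝ᵥ (x + t•d))
          = (∑ i, w i * ((v i - x) ⬝ᵥ (v i - x))) + w₀ * (x ⬝ᵥ x)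
            + (2*t*b + t^2 * W) := by
        have h5 : ∀ i, w i * ((v i - (x + t•d)) ⬝ᵥ (v i - (x + t•d)))
            = w i * ((v i - x) ⬝ᵥ (v i - x)) - 2*t*(w i * (v i j - x j))
              + t^2 * w i := by
          intro i
          rw [h2 i, expand (v i - x) t]
          have : (v i - x) j = v i j - x j := rfl
          rw [this]; ring
        have h6 : (x + t•d) ⬝ᵥ (x + t•d) = x ⬝ᵥ x + 2*t*(x j) + t^2 := by
          rw [h3, expand x (-t)]; ring
        rw [Finset.sum_congr rfl (fun i _ => h5 i), h6]
        rw [Finset.sum_add_distrib, Finset.sum_sub_distrib]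
        rw [← Finset.mul_sum, ← Finset.mul_sum]
        have h7 : ∑ i, w i * (v i j - x j)
            = (∑ i, w i * v i j) - (∑ i, w i) * x j := by
          rw [Finset.sum_mul, ← Finset.sum_sub_distrib]
          exact Finset.sum_congr rfl fun i _ => by ring
        rw [h7]
        simp only [hb, hWdef]
        ring
      rw [h4] at h1
      linarith
    have hb0 : b = 0 := by
      have h := hnonneg (-b / W)
      have he : 2 * (-b/W) * b + (-b/W)^2 * W = -(b^2/W) := by
        field_simp; ring
      rw [he] at h
      have h1 : b^2/W ≤ 0 := by linarith
      have h2 : 0 ≤ b^2/W := by positivity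
      have h4 : b^2/W = 0 := le_antisymm h1 h2
      field_simp at h4; simpa using h4
    rw [hb] at hb0
    linarith
  refine ⟨?_, ?_, ?_⟩
  · funext j
    have : ((W⁻¹ • ∑ i, w i • v i) : Fin N → ℝ) j
        = W⁻¹ * ∑ i, w i * v i j := by
      simp [Finset.sum_apply]
    rw [this, ← key j]
    field_simp
  · ext j k
    simp only [Matrix.sub_apply, Matrix.add_apply, Matrix.sum_apply,
      Matrix.smul_apply, Matrix.vecMulVec_apply, Pi.sub_apply,
      smul_eq_mul]
    have hs : ∑ i, w i * ((v i j - x j)*(v i k - x k))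
        = ∑ i, w i*(v i j * v i k) - (∑ i, w i * v i j)*x k
          - x j * (∑ i, w i * v i k) + (∑ i, w i)*(x j * x k) := by
      have h : ∀ i, w i * ((v i j - x j)*(v i k - x k))
          = w i*(v i j * v i k) - (w i * v i j)*x k
            - x j * (w i * v i k) + w i*(x j * x k) := fun i => by ring
      rw [Finset.sum_congr rfl fun i _ => h i]
      rw [Finset.sum_add_distrib, Finset.sum_sub_distrib,
        Finset.sum_sub_distrib, ← Finset.sum_mul, ← Finset.mul_sum,
        ← Finset.sum_mul]
    rw [hs, ← key j, ← key k, hWdef]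
    ring
  · ext j k
    simp only [Matrix.smul_apply, Matrix.vecMulVec_apply, Finset.sum_apply,
      Pi.smul_apply, smul_eq_mul]
    rw [← key j, ← key k]
    field_simp
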